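/- Every weak limit point of a sequence {P_n} of probability measures on a Polish space X satisfying a large deviations principle with rate function I has support contained in I⁻¹{0}. -/

import Mathlib

open MeasureTheory Filter Topology
open scoped ENNReal

set_option maxHeartbeats 1000000

/-- Every weak limit point of a sequence of probability measures satisfying a large
deviations principle with rate function `I` has (topological) support contained in
`I⁻¹{0}`. -/
theorem ldp_limit_point_support {X : Type*} [MetricSpace X] [CompleteSpace X]
    [SecondCountableTopology X] [MeasurableSpace X] [BorelSpace X]
    (I : X → ℝ≥0∞) (hlsc : LowerSemicontinuous I)
    (hlevel : ∀ c : ℝ≥0∞, c ≠ ⊤ → IsCompact {x | I x ≤ c})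
    (P : ℕ → ProbabilityMeasure X)
    (hupper : ∀ C : Set X, IsClosed C →
      limsup (fun n : ℕ => ((1/(n:ℝ) : ℝ) : EReal) * ENNReal.log ((P n : Measure X) C))
          atTop ≤ -(⨅ x ∈ C, (I x : EReal)))
    (hlower : ∀ O : Set X, IsOpen O →
      -(⨅ x ∈ O, (I x : EReal)) ≤
        liminf (fun n : ℕ => ((1/(n:ℝ) : ℝ) : EReal) * ENNReal.log ((P n : Measure X) O))
          atTop)
    (Q : ProbabilityMeasure X) (φ : ℕ → ℕ) (hφ : StrictMono φ)
    (hlim : Tendsto (fun k => P (φ k)) atTop (𝓝 Q)) :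
    {x : X | ∀ U ∈ 𝓝 x, 0 < (Q : Measure X) U} ⊆ {x | I x = 0} := by
  intro x hx
  by_contra hI0
  have hIpos : 0 < I x := pos_iff_ne_zero.mpr hI0
  obtain ⟨c, hc0, hcx⟩ := exists_between hIpos
  have hcT : c ≠ ⊤ := (lt_of_lt_of_le hcx le_top).ne
  -- lower semicontinuity: I > c near x
  have hev : ∀ᶠ y in 𝓝 x, c < I y := hlsc x c hcx
  obtain ⟨ε, hε0, hε⟩ := Metric.eventually_nhds_iff.mp hev
  set C : Set X := Metric.closedBall x (ε/2) with hCdef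
  set U : Set X := Metric.ball x (ε/2) with hUdef
  have hUC : U ⊆ C := Metric.ball_subset_closedBall
  have hinf : (c : EReal) ≤ ⨅ y ∈ C, (I y : EReal) := by
    refine le_iInf₂ fun y hy => ?_
    have hdy : dist y x < ε := lt_of_le_of_lt (Metric.mem_closedBall.mp hy) (by linarith)
    exact_mod_cast (hε hdy).le
  have hup := hupper C Metric.isClosed_closedBall
  have hup2 : limsup (fun n : ℕ => ((1/(n:ℝ) : ℝ) : EReal) * ENNReal.log ((P n : Measure X) C))
      atTop ≤ -(c : EReal) := hup.trans (EReal.neg_le_neg_iff.mpr hinf)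
  -- pick a positive real r with r < c
  have hct : 0 < c.toReal := ENNReal.toReal_pos hc0.ne' hcT
  set r : ℝ := c.toReal / 2 with hrdef
  have hr0 : 0 < r := by positivity
  have hrc : ((r : ℝ) : EReal) < (c : EReal) := by
    have hc1 : (c : EReal) = (((c : EReal).toReal : ℝ) : EReal) :=
      (EReal.coe_toReal (by simp [hcT]) (by simp)).symm
    rw [hc1, EReal.toReal_coe_ennreal]
    exact_mod_cast (by linarith : r < c.toReal)
  have hlt : limsup (fun n : ℕ => ((1/(n:ℝ) : ℝ) : EReal) * ENNReal.log ((P n : Measure X) C))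
      atTop < ((-r : ℝ) : EReal) := by
    refine lt_of_le_of_lt hup2 ?_
    rw [show ((-r : ℝ) : EReal) = -((r:ℝ) : EReal) by norm_cast]
    exact EReal.neg_lt_neg_iff.mpr hrc
  have hev2 : ∀ᶠ n : ℕ in atTop,
      ((1/(n:ℝ) : ℝ) : EReal) * ENNReal.log ((P n : Measure X) C) < ((-r : ℝ) : EReal) :=
    eventually_lt_of_limsup_lt hlt
  -- deduce measure bound
  have hbound : ∀ᶠ n : ℕ in atTop,
      (P n : Measure X) C ≤ ENNReal.ofReal (Real.exp (-(r * n))) := by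
    filter_upwards [hev2, eventually_ge_atTop 1] with n hn hn1
    have hnR : (0:ℝ) < n := by exact_mod_cast hn1
    -- rewrite LHS as a / n
    set a : EReal := ENNReal.log ((P n : Measure X) C) with hadef
    have h1 : ((1/(n:ℝ) : ℝ) : EReal) * a = a / ((n:ℝ) : EReal) := by
      rw [EReal.mul_comm]
      rw [show ((1/(n:ℝ) : ℝ) : EReal) = (((n:ℝ))⁻¹ : ℝ) by norm_num, EReal.coe_inv]
      rfl
    have h2 : a / ((n:ℝ) : EReal) < ((-r : ℝ) : EReal) := h1 ▸ hn
    have h3 : a < ((-(r * n) : ℝ) : EReal) := by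
      have := EReal.div_lt_div_right_of_pos (c := ((1/(n:ℝ) : ℝ) : EReal))
        (by exact_mod_cast one_div_pos.mpr hnR) (EReal.coe_ne_top _) h2
      have hL : a / ((n:ℝ) : EReal) / ((1/(n:ℝ) : ℝ) : EReal) = a := by
        rw [EReal.div_div, show ((n:ℝ) : EReal) * ((1/(n:ℝ) : ℝ) : EReal)
          = (((n:ℝ) * (1/(n:ℝ)) : ℝ) : EReal) from (EReal.coe_mul _ _).symm,
          mul_one_div_cancel hnR.ne', EReal.coe_one]
        rw [EReal.div_eq_inv_mul, inv_one, one_mul]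
      have hR : ((-r : ℝ) : EReal) / ((1/(n:ℝ) : ℝ) : EReal) = ((-(r * n) : ℝ) : EReal) := by
        rw [← EReal.coe_div]
        congr 1
        field_simp
      rw [hL, hR] at this
      exact this
    have h4 : (P n : Measure X) C < EReal.exp ((-(r * n) : ℝ) : EReal) := by
      calc (P n : Measure X) C = EReal.exp a := (ENNReal.exp_log _).symm
        _ < _ := EReal.exp_lt_exp_iff.mpr h3
    rw [EReal.exp_coe] at h4
    exact h4.le
  -- measures of C tend to 0
  have htend0 : Tendsto (fun n : ℕ => (P n : Measure X) C) atTop (𝓝 0) := by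
    have haux : Tendsto (fun n : ℕ => ENNReal.ofReal (Real.exp (-(r * n)))) atTop (𝓝 0) := by
      have h1 : Tendsto (fun n : ℕ => r * (n:ℝ)) atTop atTop :=
        Tendsto.const_mul_atTop hr0 tendsto_natCast_atTop_atTop
      have h1' : Tendsto (fun n : ℕ => -(r * (n:ℝ))) atTop atBot :=
        tendsto_neg_atTop_atBot.comp h1
      have h2 : Tendsto (fun n : ℕ => Real.exp (-(r * n))) atTop (𝓝 0) :=
        Real.tendsto_exp_atBot.comp h1'
      have := (ENNReal.continuous_ofReal.tendsto 0).comp h2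
      simpa [Function.comp_def] using this
    exact tendsto_of_tendsto_of_tendsto_of_le_of_le' tendsto_const_nhds haux
      (Eventually.of_forall fun n => zero_le) hbound
  -- pass to the subsequence and use portmanteau
  have hsub : Tendsto (fun k : ℕ => (P (φ k) : Measure X) C) atTop (𝓝 0) :=
    htend0.comp hφ.tendsto_atTop
  have hQU : (Q : Measure X) U ≤ liminf (fun k : ℕ => (P (φ k) : Measure X) U) atTop :=
    ProbabilityMeasure.le_liminf_measure_open_of_tendsto hlim Metric.isOpen_ball
  have hle : liminf (fun k : ℕ => (P (φ k) : Measure X) U) atTop ≤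
      liminf (fun k : ℕ => (P (φ k) : Measure X) C) atTop :=
    liminf_le_liminf (Eventually.of_forall fun k => measure_mono hUC)
  have hzero : liminf (fun k : ℕ => (P (φ k) : Measure X) C) atTop = 0 := hsub.liminf_eq
  have hQU0 : (Q : Measure X) U = 0 := le_antisymm (hQU.trans (hle.trans_eq hzero)) zero_le
  have hpos : 0 < (Q : Measure X) U := hx U (Metric.ball_mem_nhds x (by positivity))
  exact hpos.ne' hQU0
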